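/- arXiv:math/0206091 — 2 statements merged into one kernel-verified Lean document; each statement's English description precedes it below -/
import Mathlib

section
/- Let K be an algebraically closed field of characteristic p ≠ 3 and let y₁, …, y_n ∈ ℙ¹(K) be pairwise distinct points. Then there exists a nonconstant rational function h ∈ K(z) with only triple ramification such that every y_i is a branch point of h, i.e. for each i there is a point a_i ∈ ℙ¹(K) with h(a_i) = y_i and e_h(a_i) = 3. -/
set_option synthInstance.maxHeartbeats 1000000
set_option maxHeartbeats 1000000

noncomputable section
open scoped Classical

variable {K : Type*} [Field K]

/-- The self-map of `ℙ¹(K) = K ∪ {∞}` (encoded as `Option K`, with `none = ∞` and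
`some a = [a:1]`) induced by a nonconstant rational function `h ∈ K(z)`:
on `[a:1]` it is given by evaluation (poles are sent to `∞`), and at `∞` by the
substitution `z ↦ 1/z`. -/
def evalP (f : RatFunc K) : Option K → Option K
  | some a => if f.denom.eval a = 0 then none else some (f.num.eval a / f.denom.eval a)
  | none => if f.num.degree ≤ f.denom.degree
      then some (f.num.coeff f.denom.natDegree / f.denom.coeff f.denom.natDegree)
      else none

/-- The ramification index of a rational function `f ∈ K(z)` at a point `a ∈ K`:
if `f` is defined at `a` with value `b = f(a)`, it is the order of vanishing of
`f - b` at `a`, i.e. the multiplicity of `z - a` in the numerator of `f - b` written in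
lowest terms; if `f` has a pole at `a`, it is the pole order of `f` at `a`. -/
def ramIdxAt (f : RatFunc K) (a : K) : ℕ :=
  if f.denom.eval a = 0 then f.denom.rootMultiplicity a
  else ((f - RatFunc.C (f.num.eval a / f.denom.eval a)).num).rootMultiplicity a

/-- The ramification index of `f ∈ K(z)` at a point of `ℙ¹(K) = K ∪ {∞}`; at `∞` it is
the ramification index of `f(1/z)` at `0`. -/
def ramIdxP (f : RatFunc K) : Option K → ℕ
  | some a => ramIdxAt f a
  | none => ramIdxAt (RatFunc.eval (RatFunc.C : K →+* RatFunc K) (RatFunc.X)⁻¹ f) 0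

/-- A rational function is separable if its formal derivative is nonzero. -/
def SeparableRF (f : RatFunc K) : Prop :=
  Polynomial.derivative f.num * f.denom - f.num * Polynomial.derivative f.denom ≠ 0

/-- A rational function `f ∈ K(z)` has only triple ramification if it is separable and
every point of `ℙ¹(K)` has ramification index `1` or `3`. -/
def OnlyTripleRamification (f : RatFunc K) : Prop :=
  SeparableRF f ∧ ∀ p : Option K, ramIdxP f p = 1 ∨ ramIdxP f p = 3

section TripleAux

variable {K : Type*} [Field K]

/-- projectivization of a vector -/
def trProj (u v : K) : Option K := if v = 0 then none else some (u / v)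

open Polynomial

def trPval (P Q : K[X]) (a : K) : Option K := trProj (P.eval a) (Q.eval a)

def trPmult (P Q : K[X]) (a : K) : ℕ :=
  rootMultiplicity a (C (Q.eval a) * P - C (P.eval a) * Q)

def trPVal (P Q : K[X]) (N : ℕ) : Option K → Option K
  | some a => trPval P Q a
  | none => trPval (reflect N P) (reflect N Q) 0

def trPIdx (P Q : K[X]) (N : ℕ) : Option K → ℕ
  | some a => trPmult P Q a
  | none => trPmult (reflect N P) (reflect N Q) 0

/-- no pencil element vanishes -/
def trNC (P Q : K[X]) : Prop := ∀ l m : K, ¬(l = 0 ∧ m = 0) → C l * P + C m * Q ≠ 0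

theorem trNC.neP {P Q : K[X]} (h : trNC P Q) : P ≠ 0 := by
  have := h 1 0 (by simp)
  simpa using this

theorem trNC.neQ {P Q : K[X]} (h : trNC P Q) : Q ≠ 0 := by
  have := h 0 1 (by simp)
  simpa using this

theorem cop_eval_ne {P Q : K[X]} (h : IsCoprime P Q) (a : K) :
    ¬(P.eval a = 0 ∧ Q.eval a = 0) := by
  rintro ⟨h1, h2⟩
  obtain ⟨u, v, huv⟩ := h
  have := congrArg (eval a) huv
  simp [h1, h2] at this

theorem rootMultiplicity_C_mul {c : K} (hc : c ≠ 0) (p : K[X]) (a : K) :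
    rootMultiplicity a (C c * p) = rootMultiplicity a p := by
  rcases eq_or_ne p 0 with rfl | hp
  · simp
  · rw [rootMultiplicity_mul (mul_ne_zero (by simpa using hc) hp), rootMultiplicity_C, zero_add]

theorem rootMultiplicity_pow3 {p : K[X]} (hp : p ≠ 0) (a : K) :
    rootMultiplicity a (p ^ 3) = 3 * rootMultiplicity a p := by
  have h2 : p ^ 3 = p * (p * p) := by ring
  rw [h2, rootMultiplicity_mul (mul_ne_zero hp (mul_ne_zero hp hp)), rootMultiplicity_mul (mul_ne_zero hp hp)]
  ring

/-- Key pencil lemma: a pencil element vanishing at `a` has the canonical root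
multiplicity there. -/
theorem pencil_mult {P Q : K[X]} {a : K} (hnr : ¬(P.eval a = 0 ∧ Q.eval a = 0))
    {l m : K} (hlm : ¬(l = 0 ∧ m = 0)) (h0 : l * P.eval a + m * Q.eval a = 0) :
    rootMultiplicity a (C l * P + C m * Q) = trPmult P Q a := by
  set u := P.eval a with hu
  set v := Q.eval a with hv
  obtain ⟨c, hc, hcl, hcm⟩ : ∃ c : K, c ≠ 0 ∧ l = c * v ∧ m = -(c * u) := by
    rcases eq_or_ne v 0 with hv0 | hv0
    · have hu0 : u ≠ 0 := fun h => hnr ⟨h, hv0⟩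
      have hl : l = 0 := by
        have : l * u = 0 := by rw [hv0] at h0; simpa using h0
        rcases mul_eq_zero.mp this with h | h
        · exact h
        · exact absurd h hu0
      have hm : m ≠ 0 := fun h => hlm ⟨hl, h⟩
      exact ⟨-(m / u), by simp [hm, hu0], by simp [hl, hv0], by field_simp⟩
    · refine ⟨l / v, ?_, by field_simp, ?_⟩
      · intro h
        have hl : l = 0 := by
          field_simp at h; simpa using h
        have : m * v = 0 := by rw [hl] at h0; simpa using h0
        exact hlm ⟨hl, by rcases mul_eq_zero.mp this with h | h; exact h; exact absurd h hv0⟩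
      · field_simp
        linear_combination h0
  have key : C l * P + C m * Q = C c * (C v * P - C u * Q) := by
    rw [hcl, hcm]; push_cast [map_mul, map_neg]; ring
  rw [key, rootMultiplicity_C_mul hc]
  rfl

theorem trPmult_eval_zero (P Q : K[X]) (a : K) :
    (C (Q.eval a) * P - C (P.eval a) * Q).eval a = 0 := by
  simp [mul_comm]

end TripleAux
def mobVal {K : Type*} [Field K] (a b c d : K) : Option K → Option K
  | some w => trProj (a*w + b) (c*w + d)
  | none => trProj a c

def cubeVal {K : Type*} [Field K] : Option K → Option K := Option.map (fun w => w^3)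

section TripleAux2

variable {K : Type*} [Field K]
open Polynomial

theorem trProj_smul {t u v : K} (ht : t ≠ 0) : trProj (t*u) (t*v) = trProj u v := by
  unfold trProj
  rcases eq_or_ne v 0 with rfl | hv
  · simp [ht]
  · rw [if_neg (mul_ne_zero ht hv), if_neg hv, mul_div_mul_left _ _ ht]

theorem mob_eval (a b : K) (P Q : K[X]) (x : K) :
    (C a * P + C b * Q).eval x = a * P.eval x + b * Q.eval x := by simp

theorem mob_nr {P Q : K[X]} {x : K} (hnr : ¬(P.eval x = 0 ∧ Q.eval x = 0))
    {a b c d : K} (hdet : a*d - b*c ≠ 0) :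
    ¬((C a * P + C b * Q).eval x = 0 ∧ (C c * P + C d * Q).eval x = 0) := by
  rw [mob_eval, mob_eval]
  rintro ⟨h1, h2⟩
  refine hnr ⟨?_, ?_⟩
  · have : (a*d - b*c) * P.eval x = d * (a * P.eval x + b * Q.eval x)
        - b * (c * P.eval x + d * Q.eval x) := by ring
    rw [h1, h2] at this
    simpa [hdet] using this
  · have : (a*d - b*c) * Q.eval x = a * (c * P.eval x + d * Q.eval x)
        - c * (a * P.eval x + b * Q.eval x) := by ring
    rw [h1, h2] at this
    simpa [hdet] using this

theorem mob_pmult {P Q : K[X]} {x : K} (hnr : ¬(P.eval x = 0 ∧ Q.eval x = 0))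
    {a b c d : K} (hdet : a*d - b*c ≠ 0) :
    trPmult (C a * P + C b * Q) (C c * P + C d * Q) x = trPmult P Q x := by
  set u := P.eval x with hu
  set v := Q.eval x with hv
  set u1 := (C a * P + C b * Q).eval x with hu1
  set v1 := (C c * P + C d * Q).eval x with hv1
  have hu1' : u1 = a * u + b * v := by rw [hu1, mob_eval]
  have hv1' : v1 = c * u + d * v := by rw [hv1, mob_eval]
  have hnr1 : ¬(u1 = 0 ∧ v1 = 0) := mob_nr hnr hdet
  set l := v1 * a - u1 * c with hl
  set m := v1 * b - u1 * d with hm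
  have key : C v1 * (C a * P + C b * Q) - C u1 * (C c * P + C d * Q)
      = C l * P + C m * Q := by
    rw [hl, hm]; push_cast [map_sub, map_mul]; ring
  have hlm : ¬(l = 0 ∧ m = 0) := by
    rintro ⟨hl0, hm0⟩
    rw [hl] at hl0
    rw [hm] at hm0
    rcases eq_or_ne v1 0 with hv10 | hv10
    · have hu10 : u1 ≠ 0 := fun h => hnr1 ⟨h, hv10⟩
      rw [hv10, zero_mul, zero_sub, neg_eq_zero, mul_eq_zero] at hl0 hm0
      have hc : c = 0 := hl0.resolve_left hu10
      have hd : d = 0 := hm0.resolve_left hu10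
      exact hdet (by rw [hc, hd]; ring)
    · apply hdet
      have ha : a = u1 * c / v1 := by field_simp; linear_combination hl0
      have hb : b = u1 * d / v1 := by field_simp; linear_combination hm0
      rw [ha, hb]; field_simp; ring
  have h0 : l * u + m * v = 0 := by
    rw [hl, hm, hu1', hv1']; ring
  have := pencil_mult hnr hlm h0
  rw [trPmult, ← hu1, ← hv1, key, this]

theorem mob_pval {P Q : K[X]} {x : K} (hnr : ¬(P.eval x = 0 ∧ Q.eval x = 0))
    (a b c d : K) :
    trPval (C a * P + C b * Q) (C c * P + C d * Q) x = mobVal a b c d (trPval P Q x) := by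
  rcases eq_or_ne (Q.eval x) 0 with hv0 | hv0
  · have hu0 : P.eval x ≠ 0 := fun h => hnr ⟨h, hv0⟩
    have h1 : trPval P Q x = none := by rw [trPval, trProj, hv0, if_pos rfl]
    rw [h1]
    show trPval _ _ x = _
    rw [trPval, mob_eval, mob_eval, hv0, mul_zero, add_zero, mul_zero, add_zero]
    simp only [mobVal]
    rw [show a * P.eval x = P.eval x * a by ring, show c * P.eval x = P.eval x * c by ring,
       trProj_smul hu0]
  · have h1 : trPval P Q x = some (P.eval x / Q.eval x) := by
      rw [trPval, trProj, if_neg hv0]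
    rw [h1]
    simp only [mobVal]
    rw [trPval, mob_eval, mob_eval,
      show a * P.eval x + b * Q.eval x = Q.eval x * (a * (P.eval x / Q.eval x) + b) by
        field_simp,
      show c * P.eval x + d * Q.eval x = Q.eval x * (c * (P.eval x / Q.eval x) + d) by
        field_simp,
      trProj_smul hv0]

theorem cube_eval (P : K[X]) (x : K) : (P^3).eval x = (P.eval x)^3 := by simp

theorem cube_pval (P Q : K[X]) (x : K) :
    trPval (P^3) (Q^3) x = cubeVal (trPval P Q x) := by
  rw [trPval, trPval, cube_eval, cube_eval]
  rcases eq_or_ne (Q.eval x) 0 with hv0 | hv0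
  · rw [hv0]
    simp [trProj, cubeVal]
  · rw [trProj, trProj, if_neg hv0, if_neg (pow_ne_zero 3 hv0)]
    simp [cubeVal, div_pow]

theorem cube_pmult_P0 {P Q : K[X]} {x : K} (hnr : ¬(P.eval x = 0 ∧ Q.eval x = 0))
    (hPne : P ≠ 0) (hP0 : P.eval x = 0) :
    trPmult (P^3) (Q^3) x = 3 * trPmult P Q x := by
  have hv0 : Q.eval x ≠ 0 := fun h => hnr ⟨hP0, h⟩
  have e1 : ((0:K))^3 = 0 := by norm_num
  rw [trPmult, trPmult, cube_eval, cube_eval, hP0]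
  simp only [e1, map_zero, zero_mul, sub_zero]
  rw [rootMultiplicity_C_mul (pow_ne_zero 3 hv0), rootMultiplicity_C_mul hv0,
    rootMultiplicity_pow3 hPne]

theorem cube_pmult_Q0 {P Q : K[X]} {x : K} (hnr : ¬(P.eval x = 0 ∧ Q.eval x = 0))
    (hQne : Q ≠ 0) (hQ0 : Q.eval x = 0) :
    trPmult (P^3) (Q^3) x = 3 * trPmult P Q x := by
  have hu0 : P.eval x ≠ 0 := fun h => hnr ⟨h, hQ0⟩
  have e1 : ((0:K))^3 = 0 := by norm_num
  rw [trPmult, trPmult, cube_eval, cube_eval, hQ0]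
  simp only [e1, map_zero, zero_mul, zero_sub]
  rw [show -(C ((P.eval x)^3) * Q^3) = C (-((P.eval x)^3)) * Q^3 by rw [map_neg]; ring,
      show -(C (P.eval x) * Q) = C (-(P.eval x)) * Q by rw [map_neg]; ring]
  rw [rootMultiplicity_C_mul (by simpa using pow_ne_zero 3 hu0),
      rootMultiplicity_C_mul (by simpa using hu0), rootMultiplicity_pow3 hQne]

theorem cube_pmult_ne {P Q : K[X]} {x : K} (hnc : trNC P Q)
    {ω : K} (hω : ω^2 + ω + 1 = 0) (hω1 : ω ≠ 1) (hω2 : ω^2 ≠ 1)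
    (hu0 : P.eval x ≠ 0) (hv0 : Q.eval x ≠ 0) :
    trPmult (P^3) (Q^3) x = trPmult P Q x := by
  set u := P.eval x with hu
  set v := Q.eval x with hv
  have hCω : (C ω : K[X])^2 + C ω + 1 = 0 := by
    have := congrArg C hω
    simpa [map_add, map_pow, map_one, map_zero] using this
  set F0 : K[X] := C v * P - C u * Q with hF0
  set F1 : K[X] := C v * P - C (ω * u) * Q with hF1
  set F2 : K[X] := C v * P - C (ω^2 * u) * Q with hF2
  have key : C ((Q^3).eval x) * P^3 - C ((P^3).eval x) * Q^3 = F0 * (F1 * F2) := by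
    rw [cube_eval, cube_eval, ← hu, ← hv, hF0, hF1, hF2]
    push_cast [map_pow, map_mul]
    linear_combination ((C v * P)^2 * (C u * Q) - C ω * (C v * P) * (C u * Q)^2
      + (C ω - 1) * (C u * Q)^3) * hCω
  have hF0ne : F0 ≠ 0 := by
    have := hnc v (-u) (by rintro ⟨h, h'⟩; exact hv0 h)
    rwa [map_neg, neg_mul, ← sub_eq_add_neg] at this
  have hF1ne : F1 ≠ 0 := by
    have := hnc v (-(ω * u)) (by rintro ⟨h, h'⟩; exact hv0 h)
    rwa [map_neg, neg_mul, ← sub_eq_add_neg] at this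
  have hF2ne : F2 ≠ 0 := by
    have := hnc v (-(ω^2 * u)) (by rintro ⟨h, h'⟩; exact hv0 h)
    rwa [map_neg, neg_mul, ← sub_eq_add_neg] at this
  rw [trPmult, key, rootMultiplicity_mul (mul_ne_zero hF0ne (mul_ne_zero hF1ne hF2ne)),
      rootMultiplicity_mul (mul_ne_zero hF1ne hF2ne)]
  have hF1root : F1.eval x ≠ 0 := by
    rw [hF1]
    simp only [eval_sub, eval_mul, eval_C, ← hu, ← hv]
    intro h
    have : u * v * (1 - ω) = 0 := by linear_combination h
    rcases mul_eq_zero.mp this with h' | h'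
    · rcases mul_eq_zero.mp h' with h'' | h''
      exacts [hu0 h'', hv0 h'']
    · exact hω1 (by linear_combination -h')
  have hF2root : F2.eval x ≠ 0 := by
    rw [hF2]
    simp only [eval_sub, eval_mul, eval_C, ← hu, ← hv]
    intro h
    have : u * v * (1 - ω^2) = 0 := by linear_combination h
    rcases mul_eq_zero.mp this with h' | h'
    · rcases mul_eq_zero.mp h' with h'' | h''
      exacts [hu0 h'', hv0 h'']
    · exact hω2 (by linear_combination -h')
  rw [rootMultiplicity_eq_zero (p := F1) (by simpa [IsRoot] using hF1root),
      rootMultiplicity_eq_zero (p := F2) (by simpa [IsRoot] using hF2root)]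
  have hF0m : rootMultiplicity x F0 = trPmult P Q x := by
    have := pencil_mult (P := P) (Q := Q) (a := x)
      (fun h => hu0 h.1) (l := v) (m := -u) (by rintro ⟨h, h'⟩; exact hv0 h)
      (by push_cast; ring)
    rw [← this, hF0, map_neg]; ring_nf
  rw [hF0m]; ring
end TripleAux2
section TripleAux3

variable {K : Type*} [Field K]
open Polynomial

theorem mob_cop {P Q : K[X]} (h : IsCoprime P Q) {a b c d : K} (hdet : a*d - b*c ≠ 0) :
    IsCoprime (C a * P + C b * Q) (C c * P + C d * Q) := by
  obtain ⟨u, v, huv⟩ := h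
  refine ⟨(C d * u - C c * v) * C (a*d-b*c)⁻¹, (C a * v - C b * u) * C (a*d-b*c)⁻¹, ?_⟩
  have hdd : C (a*d-b*c) * C (a*d-b*c)⁻¹ = (1 : K[X]) := by
    rw [← map_mul, mul_inv_cancel₀ hdet, map_one]
  calc (C d * u - C c * v) * C (a*d-b*c)⁻¹ * (C a * P + C b * Q)
        + (C a * v - C b * u) * C (a*d-b*c)⁻¹ * (C c * P + C d * Q)
      = (u * P + v * Q) * (C (a*d-b*c) * C (a*d-b*c)⁻¹) := by
        push_cast [map_sub, map_mul]; ring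
    _ = 1 := by rw [huv, hdd, one_mul]

theorem mob_nc {P Q : K[X]} (hnc : trNC P Q) {a b c d : K} (hdet : a*d - b*c ≠ 0) :
    trNC (C a * P + C b * Q) (C c * P + C d * Q) := by
  intro l m hlm
  have key : C l * (C a * P + C b * Q) + C m * (C c * P + C d * Q)
      = C (l*a + m*c) * P + C (l*b + m*d) * Q := by
    push_cast [map_add, map_mul]; ring
  rw [key]
  apply hnc
  rintro ⟨h1, h2⟩
  apply hlm
  rcases eq_or_ne l 0 with hl | hl
  · rw [hl, zero_mul, zero_add] at h1 h2
    rcases eq_or_ne m 0 with hm | hm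
    · exact ⟨hl, hm⟩
    · exfalso
      apply hdet
      rw [(mul_eq_zero.mp h1).resolve_left hm, (mul_eq_zero.mp h2).resolve_left hm]
      ring
  · exfalso
    apply hdet
    have ha : a = -(m * c) / l := by field_simp; linear_combination h1
    have hb : b = -(m * d) / l := by field_simp; linear_combination h2
    rw [ha, hb]; field_simp; ring

theorem cube_nc {P Q : K[X]} (hnc : trNC P Q) (hcop : IsCoprime P Q) :
    trNC (P^3) (Q^3) := by
  intro l m hlm h0
  have hP : P ≠ 0 := hnc.neP
  have hQ : Q ≠ 0 := hnc.neQ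
  rcases eq_or_ne l 0 with hl | hl
  · rw [hl, map_zero, zero_mul, zero_add] at h0
    have hm : m ≠ 0 := fun h => hlm ⟨hl, h⟩
    exact (mul_ne_zero (by simpa using hm) (pow_ne_zero 3 hQ)) h0
  · have hdvd : P^3 ∣ C m * Q^3 := ⟨-(C l), by linear_combination h0⟩
    have hm : m ≠ 0 := by
      intro hm
      rw [hm, map_zero, zero_mul, add_zero, mul_eq_zero] at h0
      rcases h0 with h | h
      · exact hl (by simpa using h)
      · exact pow_ne_zero 3 hP h
    have hdvd2 : P^3 ∣ C m := (hcop.pow (m := 3) (n := 3)).dvd_of_dvd_mul_right hdvd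
    have hdeg : P.natDegree = 0 := by
      have h1 := natDegree_le_of_dvd hdvd2 (by simpa using hm)
      rw [natDegree_pow, natDegree_C] at h1
      omega
    obtain ⟨p0, hp0⟩ := natDegree_eq_zero.mp hdeg
    have hQdeg : Q.natDegree = 0 := by
      have hQ3 : C m * Q^3 = C (-(l * p0^3)) := by
        rw [map_neg, map_mul, map_pow]
        rw [← hp0] at h0
        linear_combination h0
      have : (C m * Q^3).natDegree = 0 := by rw [hQ3, natDegree_C]
      rw [natDegree_C_mul hm, natDegree_pow] at this
      omega
    obtain ⟨q0, hq0⟩ := natDegree_eq_zero.mp hQdeg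
    have hp0ne : p0 ≠ 0 := fun h => hP (by rw [← hp0, h, map_zero])
    have hq0ne : q0 ≠ 0 := fun h => hQ (by rw [← hq0, h, map_zero])
    apply hnc q0 (-p0) (by rintro ⟨h, _⟩; exact hq0ne h)
    rw [← hp0, ← hq0, map_neg]
    ring

theorem reflect_combo (N : ℕ) (a b : K) (P Q : K[X]) :
    reflect N (C a * P + C b * Q) = C a * reflect N P + C b * reflect N Q := by
  rw [reflect_add, reflect_C_mul, reflect_C_mul]

theorem reflect_pow3 {P : K[X]} {N : ℕ} (hP : P.natDegree ≤ N) :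
    reflect (3*N) (P^3) = (reflect N P)^3 := by
  have h2 : P^3 = P * (P * P) := by ring
  have h3 : (3*N) = N + (N + N) := by ring
  rw [h2, h3, reflect_mul P (P*P) hP (natDegree_mul_le.trans (add_le_add hP hP)),
    reflect_mul P P hP hP]
  ring

theorem trNC_reflect {P Q : K[X]} (hnc : trNC P Q) {N : ℕ}
    (hP : P.natDegree ≤ N) (hQ : Q.natDegree ≤ N) :
    trNC (reflect N P) (reflect N Q) := by
  intro l m hlm
  rw [← reflect_combo]
  rw [Ne, reflect_eq_zero_iff]
  exact hnc l m hlm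

theorem isCoprime_of_no_common_root [IsAlgClosed K] {P Q : K[X]}
    (h : ∀ a : K, ¬(P.eval a = 0 ∧ Q.eval a = 0)) : IsCoprime P Q := by
  classical
  by_contra hnc
  rw [← EuclideanDomain.gcd_isUnit_iff] at hnc
  rcases eq_or_ne (EuclideanDomain.gcd P Q) 0 with hg | hg
  · obtain ⟨hP, hQ⟩ := EuclideanDomain.gcd_eq_zero_iff.mp hg
    exact h 0 ⟨by rw [hP]; simp, by rw [hQ]; simp⟩
  · have hdeg : (EuclideanDomain.gcd P Q).degree ≠ 0 := by
      intro hd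
      exact hnc (isUnit_iff_degree_eq_zero.mpr hd)
    obtain ⟨a, ha⟩ := IsAlgClosed.exists_root _ hdeg
    exact h a ⟨eval_eq_zero_of_dvd_of_eval_eq_zero (EuclideanDomain.gcd_dvd_left P Q) ha,
      eval_eq_zero_of_dvd_of_eval_eq_zero (EuclideanDomain.gcd_dvd_right P Q) ha⟩

theorem eval_reflect_ne_zero {P : K[X]} {N : ℕ} (hP : P.natDegree ≤ N) {r : K}
    (hr : r ≠ 0) (h : (reflect N P).eval r = 0) : P.eval r⁻¹ = 0 := by
  haveI : Invertible (r⁻¹) := invertibleOfNonzero (inv_ne_zero hr)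
  have key := eval₂_reflect_mul_pow (RingHom.id K) (r⁻¹) N P hP
  rw [invOf_eq_inv, inv_inv] at key
  have key2 : eval r (reflect N P) * r⁻¹ ^ N = eval r⁻¹ P := key
  rw [← key2, h, zero_mul]

theorem cop_reflect [IsAlgClosed K] {P Q : K[X]} (hcop : IsCoprime P Q) {N : ℕ}
    (hP : P.natDegree ≤ N) (hQ : Q.natDegree ≤ N)
    (hmax : P.natDegree = N ∨ Q.natDegree = N) (hPne : P ≠ 0) (hQne : Q ≠ 0) :
    IsCoprime (reflect N P) (reflect N Q) := by
  apply isCoprime_of_no_common_root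
  intro a
  rintro ⟨h1, h2⟩
  rcases eq_or_ne a 0 with rfl | ha
  · rw [← coeff_zero_eq_eval_zero, coeff_reflect, revAt_le (Nat.zero_le N), Nat.sub_zero] at h1 h2
    rcases hmax with hm | hm
    · exact (leadingCoeff_ne_zero.mpr hPne) (by rwa [← hm] at h1)
    · exact (leadingCoeff_ne_zero.mpr hQne) (by rwa [← hm] at h2)
  · exact cop_eval_ne hcop a⁻¹ ⟨eval_reflect_ne_zero hP ha h1, eval_reflect_ne_zero hQ ha h2⟩

theorem exists_omega [IsAlgClosed K] (h3 : (3:K) ≠ 0) :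
    ∃ ω : K, ω^2 + ω + 1 = 0 ∧ ω ≠ 1 ∧ ω^2 ≠ 1 := by
  obtain ⟨ω, hω⟩ := IsAlgClosed.exists_root (X^2 + X + 1 : K[X]) (by
    have : (X^2 + X + 1 : K[X]).degree = 2 := by compute_degree!
    rw [this]; exact (by norm_num))
  have hw : ω^2 + ω + 1 = 0 := by simpa [IsRoot] using hω
  refine ⟨ω, hw, ?_, ?_⟩
  · intro h1
    rw [h1] at hw
    norm_num at hw
    exact h3 (by linear_combination hw)
  · intro h2
    have hωval : ω = -2 := by linear_combination hw - h2
    rw [hωval] at hw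
    norm_num at hw
    exact h3 (by linear_combination hw)

end TripleAux3
section TripleAux4

variable {K : Type*} [Field K]
open Polynomial

@[simp] theorem trPVal_some (P Q : K[X]) (N : ℕ) (x : K) :
    trPVal P Q N (some x) = trPval P Q x := rfl
@[simp] theorem trPVal_none (P Q : K[X]) (N : ℕ) :
    trPVal P Q N none = trPval (reflect N P) (reflect N Q) 0 := rfl
@[simp] theorem trPIdx_some (P Q : K[X]) (N : ℕ) (x : K) :
    trPIdx P Q N (some x) = trPmult P Q x := rfl
@[simp] theorem trPIdx_none (P Q : K[X]) (N : ℕ) :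
    trPIdx P Q N none = trPmult (reflect N P) (reflect N Q) 0 := rfl

structure trGood (P Q : K[X]) (N : ℕ) : Prop where
  cop : IsCoprime P Q
  nc : trNC P Q
  degP : P.natDegree ≤ N
  degQ : Q.natDegree ≤ N
  degmax : P.natDegree = N ∨ Q.natDegree = N
  sep : derivative P * Q - P * derivative Q ≠ 0
  idx : ∀ pt : Option K, trPIdx P Q N pt = 1 ∨ trPIdx P Q N pt = 3
  surj : Function.Surjective (trPVal P Q N)

namespace trGood

variable {P Q : K[X]} {N : ℕ}

theorem nr (G : trGood P Q N) (a : K) : ¬(P.eval a = 0 ∧ Q.eval a = 0) :=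
  cop_eval_ne G.cop a

theorem nr_refl (G : trGood P Q N) :
    ¬((reflect N P).eval 0 = 0 ∧ (reflect N Q).eval 0 = 0) := by
  rw [← coeff_zero_eq_eval_zero, ← coeff_zero_eq_eval_zero, coeff_reflect, coeff_reflect,
    revAt_le (Nat.zero_le N), Nat.sub_zero]
  rcases G.degmax with hm | hm
  · rintro ⟨h1, _⟩
    exact (leadingCoeff_ne_zero.mpr G.nc.neP) (by rwa [← hm] at h1)
  · rintro ⟨_, h2⟩
    exact (leadingCoeff_ne_zero.mpr G.nc.neQ) (by rwa [← hm] at h2)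

theorem coeffN_nr (G : trGood P Q N) : ¬(P.coeff N = 0 ∧ Q.coeff N = 0) := by
  rcases G.degmax with hm | hm
  · rintro ⟨h1, _⟩
    exact (leadingCoeff_ne_zero.mpr G.nc.neP) (by rwa [← hm] at h1)
  · rintro ⟨_, h2⟩
    exact (leadingCoeff_ne_zero.mpr G.nc.neQ) (by rwa [← hm] at h2)

end trGood

theorem det_pair_ne {a b c d u v : K} (hdet : a*d - b*c ≠ 0) (huv : ¬(u = 0 ∧ v = 0)) :
    ¬(a*u + b*v = 0 ∧ c*u + d*v = 0) := by
  rintro ⟨h1, h2⟩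
  refine huv ⟨?_, ?_⟩
  · have : (a*d - b*c) * u = d * (a*u + b*v) - b * (c*u + d*v) := by ring
    rw [h1, h2] at this
    simpa [hdet] using this
  · have : (a*d - b*c) * v = a * (c*u + d*v) - c * (a*u + b*v) := by ring
    rw [h1, h2] at this
    simpa [hdet] using this

theorem mobVal_comp {a b c d : K} (hdet : a*d - b*c ≠ 0) (v : Option K) :
    mobVal d (-b) (-c) a (mobVal a b c d v) = v := by
  have hcd : ¬(c = 0 ∧ d = 0) := by rintro ⟨h1, h2⟩; rw [h1, h2] at hdet; simp at hdet
  match v with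
  | none =>
    show mobVal d (-b) (-c) a (trProj a c) = none
    rcases eq_or_ne c 0 with hc | hc
    · rw [trProj, if_pos hc]
      show trProj d (-c) = none
      rw [hc, neg_zero, trProj, if_pos rfl]
    · rw [trProj, if_neg hc]
      show trProj (d * (a/c) + -b) (-c * (a/c) + a) = none
      rw [show -c * (a/c) + a = 0 by field_simp; ring, trProj, if_pos rfl]
  | some w =>
    show mobVal d (-b) (-c) a (trProj (a*w+b) (c*w+d)) = some w
    rcases eq_or_ne (c*w+d) 0 with hc | hc
    · rw [trProj, if_pos hc]
      show trProj d (-c) = some w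
      have hcne : c ≠ 0 := by
        intro h; rw [h, zero_mul, zero_add] at hc; exact hcd ⟨h, hc⟩
      rw [trProj, if_neg (neg_ne_zero.mpr hcne)]
      congr 1
      rw [eq_comm, eq_div_iff (neg_ne_zero.mpr hcne)]
      linear_combination -hc
    · rw [trProj, if_neg hc]
      show trProj (d * ((a*w+b)/(c*w+d)) + -b) (-c * ((a*w+b)/(c*w+d)) + a) = some w
      have e2 : -c * ((a*w+b)/(c*w+d)) + a = (a*d - b*c) / (c*w+d) := by
        field_simp; ring
      have e1 : d * ((a*w+b)/(c*w+d)) + -b = (a*d - b*c) * w / (c*w+d) := by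
        rw [mul_div_assoc', div_add' _ _ _ hc]; congr 1; ring
      rw [trProj, e1, e2, if_neg (div_ne_zero hdet hc)]
      congr 1
      rw [div_eq_iff (div_ne_zero hdet hc)]
      field_simp

theorem mobVal_comp' {a b c d : K} (hdet : a*d - b*c ≠ 0) (v : Option K) :
    mobVal a b c d (mobVal d (-b) (-c) a v) = v := by
  have hdet' : d*a - (-b)*(-c) ≠ 0 := by intro h; apply hdet; linear_combination h
  have := mobVal_comp hdet' v
  simpa using this

theorem mobVal_surj {a b c d : K} (hdet : a*d - b*c ≠ 0) :
    Function.Surjective (mobVal a b c d) :=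
  fun v => ⟨mobVal d (-b) (-c) a v, mobVal_comp' hdet v⟩

theorem mobVal_inj {a b c d : K} (hdet : a*d - b*c ≠ 0) :
    Function.Injective (mobVal a b c d) := by
  intro x y h
  have := congrArg (mobVal d (-b) (-c) a) h
  rwa [mobVal_comp hdet, mobVal_comp hdet] at this

theorem cubeVal_surj [IsAlgClosed K] : Function.Surjective (cubeVal (K := K)) := by
  rintro (_ | u)
  · exact ⟨none, rfl⟩
  · obtain ⟨z, hz⟩ := IsAlgClosed.exists_pow_nat_eq (k := K) u (n := 3) (by norm_num)
    exact ⟨some z, by simp [cubeVal, hz]⟩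

theorem mobVal_preimage_finite {a b c d : K} (hdet : a*d - b*c ≠ 0) {S : Set (Option K)}
    (hS : S.Finite) : (mobVal a b c d ⁻¹' S).Finite := by
  have : mobVal a b c d ⁻¹' S ⊆ mobVal d (-b) (-c) a '' S := by
    intro x hx
    exact ⟨mobVal a b c d x, hx, mobVal_comp hdet x⟩
  exact (hS.image _).subset this

theorem cubeVal_preimage_finite {S : Set (Option K)} (hS : S.Finite) :
    (cubeVal ⁻¹' S : Set (Option K)).Finite := by
  apply Set.Finite.preimage' hS
  rintro (_ | u) _
  · refine Set.Finite.subset (Set.finite_singleton none) ?_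
    rintro (_ | w) hw
    · exact Set.mem_singleton _
    · exfalso
      have h1 : cubeVal (some w) = none := Set.mem_singleton_iff.mp (Set.mem_preimage.mp hw)
      simp [cubeVal] at h1
  · refine Set.Finite.subset (((finite_setOf_isRoot
      (X_pow_sub_C_ne_zero (n := 3) (by norm_num) u)).image some).insert none) ?_
    rintro (_ | w) hw
    · exact Set.mem_insert _ _
    · have h1 : cubeVal (some w) = some u := Set.mem_singleton_iff.mp (Set.mem_preimage.mp hw)
      have h2 : w^3 = u := by simpa [cubeVal] using h1
      exact Set.mem_insert_of_mem _ ⟨w, by simp [IsRoot, h2], rfl⟩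

theorem exists_fresh {S : Set (Option K)} (hS : S.Finite) [Infinite K] :
    ∃ t : K, some t ∉ S := by
  have h1 : {t : K | some t ∈ S}.Finite :=
    hS.preimage (Set.injOn_of_injective (Option.some_injective K))
  obtain ⟨t, ht⟩ := h1.infinite_compl.nonempty
  exact ⟨t, ht⟩

end TripleAux4
section TripleAux5

variable {K : Type*} [Field K]
open Polynomial

theorem trGood.mob {P Q : K[X]} {N : ℕ} (G : trGood P Q N) {a b c d : K}
    (hdet : a*d - b*c ≠ 0) :
    trGood (C a * P + C b * Q) (C c * P + C d * Q) N ∧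
    (∀ pt, trPVal (C a * P + C b * Q) (C c * P + C d * Q) N pt
      = mobVal a b c d (trPVal P Q N pt)) ∧
    (∀ pt, trPIdx (C a * P + C b * Q) (C c * P + C d * Q) N pt = trPIdx P Q N pt) := by
  have hreflP : reflect N (C a * P + C b * Q) = C a * reflect N P + C b * reflect N Q :=
    reflect_combo N a b P Q
  have hreflQ : reflect N (C c * P + C d * Q) = C c * reflect N P + C d * reflect N Q :=
    reflect_combo N c d P Q
  have hval : ∀ pt, trPVal (C a * P + C b * Q) (C c * P + C d * Q) N pt
      = mobVal a b c d (trPVal P Q N pt) := by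
    rintro (_ | x)
    · rw [trPVal_none, trPVal_none, hreflP, hreflQ]
      exact mob_pval G.nr_refl a b c d
    · exact mob_pval (G.nr x) a b c d
  have hidx : ∀ pt, trPIdx (C a * P + C b * Q) (C c * P + C d * Q) N pt
      = trPIdx P Q N pt := by
    rintro (_ | x)
    · rw [trPIdx_none, trPIdx_none, hreflP, hreflQ]
      exact mob_pmult G.nr_refl hdet
    · exact mob_pmult (G.nr x) hdet
  refine ⟨⟨mob_cop G.cop hdet, mob_nc G.nc hdet, ?_, ?_, ?_, ?_, ?_, ?_⟩, hval, hidx⟩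
  · exact (natDegree_add_le _ _).trans
      (max_le ((natDegree_C_mul_le _ _).trans G.degP) ((natDegree_C_mul_le _ _).trans G.degQ))
  · exact (natDegree_add_le _ _).trans
      (max_le ((natDegree_C_mul_le _ _).trans G.degP) ((natDegree_C_mul_le _ _).trans G.degQ))
  · -- degmax
    have hco : ¬(a * P.coeff N + b * Q.coeff N = 0 ∧ c * P.coeff N + d * Q.coeff N = 0) :=
      det_pair_ne hdet G.coeffN_nr
    have hc1 : (C a * P + C b * Q).coeff N = a * P.coeff N + b * Q.coeff N := by
      simp [coeff_add, coeff_C_mul]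
    have hc2 : (C c * P + C d * Q).coeff N = c * P.coeff N + d * Q.coeff N := by
      simp [coeff_add, coeff_C_mul]
    rcases not_and_or.mp hco with h | h
    · left
      refine le_antisymm ((natDegree_add_le _ _).trans
        (max_le ((natDegree_C_mul_le _ _).trans G.degP) ((natDegree_C_mul_le _ _).trans G.degQ)))
        (le_natDegree_of_ne_zero ?_)
      rwa [hc1]
    · right
      refine le_antisymm ((natDegree_add_le _ _).trans
        (max_le ((natDegree_C_mul_le _ _).trans G.degP) ((natDegree_C_mul_le _ _).trans G.degQ)))
        (le_natDegree_of_ne_zero ?_)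
      rwa [hc2]
  · -- sep
    have key : derivative (C a * P + C b * Q) * (C c * P + C d * Q)
        - (C a * P + C b * Q) * derivative (C c * P + C d * Q)
        = C (a*d - b*c) * (derivative P * Q - P * derivative Q) := by
      simp only [derivative_add, derivative_C_mul, map_sub, map_mul]
      ring
    rw [key]
    exact mul_ne_zero (by rwa [Ne, Polynomial.C_eq_zero]) G.sep
  · intro pt
    rw [hidx pt]
    exact G.idx pt
  · intro v
    obtain ⟨w, hw⟩ := mobVal_surj hdet v
    obtain ⟨pt, hpt⟩ := G.surj w
    exact ⟨pt, by rw [hval pt, hpt, hw]⟩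

theorem trPval_eq_zero_iff {P Q : K[X]} {x : K} :
    trPval P Q x = some 0 ↔ (P.eval x = 0 ∧ Q.eval x ≠ 0) := by
  rw [trPval, trProj]
  rcases eq_or_ne (Q.eval x) 0 with hv | hv
  · simp [hv]
  · rw [if_neg hv]
    simp only [Option.some.injEq]
    constructor
    · intro h
      exact ⟨by field_simp at h; simpa using h, hv⟩
    · rintro ⟨h, _⟩
      rw [h, zero_div]

theorem trPval_eq_none_iff {P Q : K[X]} {x : K} :
    trPval P Q x = none ↔ Q.eval x = 0 := by
  rw [trPval, trProj]
  rcases eq_or_ne (Q.eval x) 0 with hv | hv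
  · simp [hv]
  · simp [hv]

theorem trGood.cube [IsAlgClosed K] {P Q : K[X]} {N : ℕ} (h3 : (3:K) ≠ 0)
    (G : trGood P Q N)
    (hside : ∀ pt, (trPVal P Q N pt = some 0 ∨ trPVal P Q N pt = none) → trPIdx P Q N pt = 1) :
    trGood (P^3) (Q^3) (3*N) ∧
    (∀ pt, trPVal (P^3) (Q^3) (3*N) pt = cubeVal (trPVal P Q N pt)) ∧
    (∀ pt, ((trPVal P Q N pt = some 0 ∨ trPVal P Q N pt = none) →
        trPIdx (P^3) (Q^3) (3*N) pt = 3) ∧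
      (¬(trPVal P Q N pt = some 0 ∨ trPVal P Q N pt = none) →
        trPIdx (P^3) (Q^3) (3*N) pt = trPIdx P Q N pt)) := by
  obtain ⟨ω, hω, hω1, hω2⟩ := exists_omega h3
  have hreflP : reflect (3*N) (P^3) = (reflect N P)^3 := reflect_pow3 G.degP
  have hreflQ : reflect (3*N) (Q^3) = (reflect N Q)^3 := reflect_pow3 G.degQ
  have hrPne : reflect N P ≠ 0 := fun h => G.nc.neP (reflect_eq_zero_iff.mp h)
  have hrQne : reflect N Q ≠ 0 := fun h => G.nc.neQ (reflect_eq_zero_iff.mp h)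
  have hrnc : trNC (reflect N P) (reflect N Q) := trNC_reflect G.nc G.degP G.degQ
  have hval : ∀ pt, trPVal (P^3) (Q^3) (3*N) pt = cubeVal (trPVal P Q N pt) := by
    rintro (_ | x)
    · rw [trPVal_none, trPVal_none, hreflP, hreflQ]
      exact cube_pval _ _ 0
    · exact cube_pval P Q x
  have hidx : ∀ pt, ((trPVal P Q N pt = some 0 ∨ trPVal P Q N pt = none) →
        trPIdx (P^3) (Q^3) (3*N) pt = 3) ∧
      (¬(trPVal P Q N pt = some 0 ∨ trPVal P Q N pt = none) →
        trPIdx (P^3) (Q^3) (3*N) pt = trPIdx P Q N pt) := by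
    rintro (_ | x)
    · constructor
      · intro h
        have h1 : trPIdx P Q N none = 1 := hside none (by exact h)
        rw [trPIdx_none] at h1
        rw [trPIdx_none, hreflP, hreflQ]
        rcases h with h | h
        · rw [trPVal_none] at h
          rw [cube_pmult_P0 G.nr_refl hrPne (trPval_eq_zero_iff.mp h).1, h1]
        · rw [trPVal_none] at h
          rw [cube_pmult_Q0 G.nr_refl hrQne (trPval_eq_none_iff.mp h), h1]
      · intro h
        push_neg at h
        obtain ⟨h1, h2⟩ := h
        rw [trPVal_none] at h1 h2
        have hu0 : (reflect N P).eval 0 ≠ 0 := by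
          intro hu
          rcases eq_or_ne ((reflect N Q).eval 0) 0 with hv | hv
          · exact h2 (trPval_eq_none_iff.mpr hv)
          · exact h1 (trPval_eq_zero_iff.mpr ⟨hu, hv⟩)
        have hv0 : (reflect N Q).eval 0 ≠ 0 := fun hv => h2 (trPval_eq_none_iff.mpr hv)
        rw [trPIdx_none, trPIdx_none, hreflP, hreflQ]
        exact cube_pmult_ne hrnc hω hω1 hω2 hu0 hv0
    · constructor
      · intro h
        have h1 : trPIdx P Q N (some x) = 1 := hside (some x) (by exact h)
        rw [trPIdx_some] at h1
        rw [trPIdx_some]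
        rcases h with h | h
        · rw [trPVal_some] at h
          rw [cube_pmult_P0 (G.nr x) G.nc.neP (trPval_eq_zero_iff.mp h).1, h1]
        · rw [trPVal_some] at h
          rw [cube_pmult_Q0 (G.nr x) G.nc.neQ (trPval_eq_none_iff.mp h), h1]
      · intro h
        push_neg at h
        obtain ⟨h1, h2⟩ := h
        rw [trPVal_some] at h1 h2
        have hu0 : P.eval x ≠ 0 := by
          intro hu
          rcases eq_or_ne (Q.eval x) 0 with hv | hv
          · exact h2 (trPval_eq_none_iff.mpr hv)
          · exact h1 (trPval_eq_zero_iff.mpr ⟨hu, hv⟩)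
        have hv0 : Q.eval x ≠ 0 := fun hv => h2 (trPval_eq_none_iff.mpr hv)
        rw [trPIdx_some, trPIdx_some]
        exact cube_pmult_ne G.nc hω hω1 hω2 hu0 hv0
  refine ⟨⟨G.cop.pow, cube_nc G.nc G.cop, ?_, ?_, ?_, ?_, ?_, ?_⟩, hval, hidx⟩
  · rw [natDegree_pow]
    exact Nat.mul_le_mul_left 3 G.degP
  · rw [natDegree_pow]
    exact Nat.mul_le_mul_left 3 G.degQ
  · rcases G.degmax with hm | hm
    · left; rw [natDegree_pow, hm]
    · right; rw [natDegree_pow, hm]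
  · -- sep
    have key : derivative (P^3) * Q^3 - P^3 * derivative (Q^3)
        = C (3:K) * (P^2 * Q^2 * (derivative P * Q - P * derivative Q)) := by
      rw [derivative_pow, derivative_pow]
      push_cast
      ring
    rw [key]
    exact mul_ne_zero (by rwa [Ne, Polynomial.C_eq_zero])
      (mul_ne_zero (mul_ne_zero (pow_ne_zero 2 G.nc.neP) (pow_ne_zero 2 G.nc.neQ)) G.sep)
  · intro pt
    by_cases h : trPVal P Q N pt = some 0 ∨ trPVal P Q N pt = none
    · right; exact (hidx pt).1 h
    · rw [(hidx pt).2 h]; exact G.idx pt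
  · intro v
    obtain ⟨w, hw⟩ := cubeVal_surj v
    obtain ⟨pt, hpt⟩ := G.surj w
    exact ⟨pt, by rw [hval pt, hpt, hw]⟩

end TripleAux5
section TripleAux6

variable {K : Type*} [Field K]
open Polynomial

theorem trGood_base : trGood (X : K[X]) 1 1 ∧ (∀ pt, trPVal (X : K[X]) 1 1 pt = pt) ∧
    (∀ pt, trPIdx (X : K[X]) 1 1 pt = 1) := by
  have hreflX : reflect 1 (X : K[X]) = 1 := by
    rw [← pow_one (X : K[X]), reflect_monomial, revAt_le (le_refl 1), Nat.sub_self, pow_zero]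
  have hrefl1 : reflect 1 (1 : K[X]) = X := by
    rw [show (1 : K[X]) = C 1 from (map_one C).symm, reflect_C, map_one, one_mul, pow_one]
  have hval : ∀ pt, trPVal (X : K[X]) 1 1 pt = pt := by
    rintro (_ | x)
    · rw [trPVal_none, hreflX, hrefl1, trPval, trProj]
      simp
    · rw [trPVal_some, trPval, trProj]
      simp
  have hidx : ∀ pt, trPIdx (X : K[X]) 1 1 pt = 1 := by
    rintro (_ | x)
    · rw [trPIdx_none, hreflX, hrefl1, trPmult]
      have e : C ((X : K[X]).eval 0) * 1 - C ((1:K[X]).eval 0) * X = C (-1) * (X - C 0) := by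
        simp
      rw [e, rootMultiplicity_C_mul (by norm_num), rootMultiplicity_X_sub_C_self]
    · rw [trPIdx_some, trPmult]
      have e : C ((1:K[X]).eval x) * X - C ((X:K[X]).eval x) * 1 = X - C x := by
        simp
      rw [e, rootMultiplicity_X_sub_C_self]
  refine ⟨⟨isCoprime_one_right, ?_, ?_, ?_, ?_, ?_, ?_, ?_⟩, hval, hidx⟩
  · intro l m hlm h
    apply hlm
    constructor
    · have := congrArg (fun p => Polynomial.coeff p 1) h
      simpa [coeff_C] using this
    · have := congrArg (fun p => Polynomial.coeff p 0) h
      simpa [coeff_C] using this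
  · rw [natDegree_X]
  · rw [natDegree_one]; omega
  · left; rw [natDegree_X]
  · simp
  · intro pt
    left
    exact hidx pt
  · intro v
    exact ⟨v, hval v⟩

theorem trStar [IsAlgClosed K] (h3 : (3:K) ≠ 0) :
    ∀ (m : ℕ) (x : Fin m → Option K), Function.Injective x →
    ∀ (Z : Set (Option K)), Z.Finite → (∀ i, x i ∉ Z) →
    ∃ P Q : K[X], ∃ N : ℕ, trGood P Q N ∧
      (∀ i, ∃ pt, trPVal P Q N pt = x i ∧ trPIdx P Q N pt = 3) ∧
      (∀ pt, trPIdx P Q N pt = 3 → trPVal P Q N pt ∉ Z) := by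
  intro m
  induction m with
  | zero =>
    intro x hx Z hZ hZx
    obtain ⟨G0, hval, hidx⟩ := trGood_base (K := K)
    refine ⟨X, 1, 1, G0, fun i => absurd i.2 (by omega), fun pt h => ?_⟩
    rw [hidx pt] at h
    omega
  | succ m ih =>
    intro x hx Z hZ hZx
    obtain ⟨t, ht⟩ := exists_fresh (hZ.union (Set.finite_range x))
    rw [Set.mem_union, not_or] at ht
    obtain ⟨htZ, htx⟩ := ht
    obtain ⟨a, b, c, d, hdet, hσ0, hσinf⟩ : ∃ a b c d : K, a*d - b*c ≠ 0 ∧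
        mobVal a b c d (some 0) = x (Fin.last m) ∧ mobVal a b c d none = some t := by
      rcases hyl : x (Fin.last m) with _ | y0
      · refine ⟨t, 1, 1, 0, by norm_num, ?_, ?_⟩
        · show trProj (t*0 + 1) (1*0 + 0) = none
          rw [trProj]
          norm_num
        · show trProj t 1 = some t
          rw [trProj]
          norm_num
      · have hty0 : t ≠ y0 := by
          intro h
          exact htx ⟨Fin.last m, by rw [hyl, h]⟩
        refine ⟨t, y0, 1, 1, by simpa using sub_ne_zero.mpr hty0, ?_, ?_⟩
        · show trProj (t*0 + y0) (1*0 + 1) = some y0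
          rw [trProj]
          norm_num
        · show trProj t 1 = some t
          rw [trProj]
          norm_num
    set Gm : Option K → Option K := fun w => mobVal a b c d (cubeVal w) with hGm
    have hGsurj : Function.Surjective Gm := (mobVal_surj hdet).comp cubeVal_surj
    choose x' hx' using fun i : Fin m => hGsurj (x i.castSucc)
    have hx'inj : Function.Injective x' := by
      intro i j h
      have : x i.castSucc = x j.castSucc := by rw [← hx' i, ← hx' j, h]
      exact Fin.castSucc_injective m (hx this)
    set Zin : Set (Option K) := Gm ⁻¹' Z ∪ {some 0, none} with hZin
    have hZinFin : Zin.Finite := by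
      apply Set.Finite.union
      · have : Gm ⁻¹' Z = cubeVal ⁻¹' (mobVal a b c d ⁻¹' Z) := rfl
        rw [this]
        exact cubeVal_preimage_finite (mobVal_preimage_finite hdet hZ)
      · exact (Set.finite_singleton none).insert (some 0)
    have hG0 : Gm (some 0) = x (Fin.last m) := by
      have : cubeVal (some (0:K)) = some 0 := by simp [cubeVal]
      rw [hGm]
      simp only []
      rw [this, hσ0]
    have hGnone : Gm none = some t := by
      have : cubeVal (none : Option K) = none := rfl
      rw [hGm]
      simp only []
      rw [this, hσinf]
    have hdisj : ∀ i, x' i ∉ Zin := by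
      intro i hi
      rcases hi with hi | hi
      · exact hZx i.castSucc (by rw [← hx' i]; exact hi)
      · rcases hi with hi | hi
        · have : x i.castSucc = x (Fin.last m) := by
            rw [← hx' i, hi, hG0]
          have := hx this
          exact absurd this (Fin.castSucc_lt_last i).ne
        · rw [Set.mem_singleton_iff] at hi
          have : x i.castSucc = some t := by rw [← hx' i, hi, hGnone]
          exact htx ⟨i.castSucc, this⟩
    obtain ⟨P, Q, N, G0, hhit, havoid⟩ := ih x' hx'inj Zin hZinFin hdisj
    have hmemZin0 : (some (0:K)) ∈ Zin := Or.inr (Or.inl rfl)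
    have hmemZinN : (none : Option K) ∈ Zin := Or.inr (Or.inr rfl)
    have hside : ∀ pt, (trPVal P Q N pt = some 0 ∨ trPVal P Q N pt = none) →
        trPIdx P Q N pt = 1 := by
      intro pt hpt
      rcases G0.idx pt with h | h
      · exact h
      · exfalso
        apply havoid pt h
        rcases hpt with h' | h' <;> rw [h']
        · exact hmemZin0
        · exact hmemZinN
    obtain ⟨G1, hval1, hidx1⟩ := G0.cube h3 hside
    obtain ⟨G2, hval2, hidx2⟩ := G1.mob (a := a) (b := b) (c := c) (d := d) hdet
    have hvalG : ∀ pt, trPVal (C a * P^3 + C b * Q^3) (C c * P^3 + C d * Q^3) (3*N) pt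
        = Gm (trPVal P Q N pt) := by
      intro pt
      rw [hval2 pt, hval1 pt]
    refine ⟨_, _, _, G2, ?_, ?_⟩
    · intro i
      refine Fin.lastCases ?_ ?_ i
      · obtain ⟨pt, hpt⟩ := G0.surj (some 0)
        refine ⟨pt, ?_, ?_⟩
        · rw [hvalG pt, hpt, hG0]
        · rw [hidx2 pt]
          exact (hidx1 pt).1 (Or.inl hpt)
      · intro j
        obtain ⟨pt, hpt, hptidx⟩ := hhit j
        refine ⟨pt, ?_, ?_⟩
        · rw [hvalG pt, hpt, hx' j]
        · rw [hidx2 pt]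
          have hnot : ¬(trPVal P Q N pt = some 0 ∨ trPVal P Q N pt = none) := by
            rintro (h | h) <;> rw [hpt] at h
            · exact hdisj j (h ▸ hmemZin0)
            · exact hdisj j (h ▸ hmemZinN)
          rw [(hidx1 pt).2 hnot]
          exact hptidx
    · intro pt hpt3
      rw [hvalG pt]
      rw [hidx2 pt] at hpt3
      by_cases hv : trPVal P Q N pt = some 0 ∨ trPVal P Q N pt = none
      · rcases hv with hv | hv <;> rw [hv]
        · rw [hG0]; exact hZx (Fin.last m)
        · rw [hGnone]; exact htZ
      · rw [(hidx1 pt).2 hv] at hpt3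
        have := havoid pt hpt3
        intro hmem
        exact this (Or.inl hmem)

end TripleAux6
section TripleAux7

variable {K : Type*} [Field K]
open Polynomial

theorem trNumDenom {P Q : K[X]} (hcop : IsCoprime P Q) (hQ : Q ≠ 0) :
    (algebraMap K[X] (RatFunc K) P / algebraMap K[X] (RatFunc K) Q).num
      = C Q.leadingCoeff⁻¹ * P ∧
    (algebraMap K[X] (RatFunc K) P / algebraMap K[X] (RatFunc K) Q).denom
      = C Q.leadingCoeff⁻¹ * Q := by
  classical
  have h1 : IsUnit (gcd P Q) := (gcd_isUnit_iff P Q).mpr hcop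
  have hgcd : gcd P Q = 1 := by
    rw [← normalize_gcd]
    exact normalize_eq_one.mpr h1
  constructor
  · rw [RatFunc.num_div, hgcd]
    simp
  · rw [RatFunc.denom_div _ hQ, hgcd]
    simp

theorem ramIdxAt_eq {P Q : K[X]} (hcop : IsCoprime P Q) (hnc : trNC P Q) (x : K) :
    ramIdxAt (algebraMap K[X] (RatFunc K) P / algebraMap K[X] (RatFunc K) Q) x
      = trPmult P Q x := by
  obtain ⟨hnum, hden⟩ := trNumDenom hcop hnc.neQ
  have hu : Q.leadingCoeff⁻¹ ≠ 0 := inv_ne_zero (leadingCoeff_ne_zero.mpr hnc.neQ)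
  rcases eq_or_ne (Q.eval x) 0 with hv | hv
  · have hPx : P.eval x ≠ 0 := fun h => (cop_eval_ne hcop x) ⟨h, hv⟩
    have hdenx : ((algebraMap K[X] (RatFunc K) P / algebraMap K[X] (RatFunc K) Q).denom).eval x
        = 0 := by rw [hden]; simp [hv]
    rw [ramIdxAt, if_pos hdenx, hden, rootMultiplicity_C_mul hu]
    rw [trPmult, hv, map_zero, zero_mul, zero_sub,
      show -(C (P.eval x) * Q) = C (-(P.eval x)) * Q by rw [map_neg]; ring,
      rootMultiplicity_C_mul (neg_ne_zero.mpr hPx)]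
  · have hdenx : ((algebraMap K[X] (RatFunc K) P / algebraMap K[X] (RatFunc K) Q).denom).eval x
        ≠ 0 := by
      rw [hden]
      simp only [eval_mul, eval_C]
      exact mul_ne_zero hu hv
    rw [ramIdxAt, if_neg hdenx]
    have hvval : ((algebraMap K[X] (RatFunc K) P / algebraMap K[X] (RatFunc K) Q).num).eval x
        / ((algebraMap K[X] (RatFunc K) P / algebraMap K[X] (RatFunc K) Q).denom).eval x
        = P.eval x / Q.eval x := by
      rw [hnum, hden]
      simp only [eval_mul, eval_C]
      rw [mul_div_mul_left _ _ hu]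
    rw [hvval]
    set val := P.eval x / Q.eval x with hval
    have hsub : algebraMap K[X] (RatFunc K) P / algebraMap K[X] (RatFunc K) Q
        - RatFunc.C val
        = algebraMap K[X] (RatFunc K) (P - C val * Q) / algebraMap K[X] (RatFunc K) Q := by
      rw [map_sub, map_mul, RatFunc.algebraMap_C]
      rw [sub_div, mul_div_assoc, div_self (RatFunc.algebraMap_ne_zero hnc.neQ), mul_one]
    have hcop2 : IsCoprime (P - C val * Q) Q := by
      have := hcop.add_mul_left_left (-(C val))
      rwa [mul_neg, ← sub_eq_add_neg, mul_comm] at this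
    obtain ⟨hnum2, _⟩ := trNumDenom hcop2 hnc.neQ
    rw [hsub, hnum2, rootMultiplicity_C_mul hu]
    have key : C (Q.eval x) * P - C (P.eval x) * Q = C (Q.eval x) * (P - C val * Q) := by
      rw [mul_sub, hval, ← mul_assoc, ← map_mul]
      rw [mul_div_cancel₀ _ hv]
    rw [trPmult, key, rootMultiplicity_C_mul hv]

theorem evalP_some_eq {P Q : K[X]} (hcop : IsCoprime P Q) (hnc : trNC P Q) (x : K) :
    evalP (algebraMap K[X] (RatFunc K) P / algebraMap K[X] (RatFunc K) Q) (some x)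
      = trPval P Q x := by
  obtain ⟨hnum, hden⟩ := trNumDenom hcop hnc.neQ
  have hu : Q.leadingCoeff⁻¹ ≠ 0 := inv_ne_zero (leadingCoeff_ne_zero.mpr hnc.neQ)
  show (if _ = 0 then none else some _) = trPval P Q x
  rw [hnum, hden, trPval, trProj]
  simp only [eval_mul, eval_C]
  rcases eq_or_ne (Q.eval x) 0 with hv | hv
  · rw [if_pos (by rw [hv, mul_zero]), if_pos hv]
  · rw [if_neg (mul_ne_zero hu hv), if_neg hv, mul_div_mul_left _ _ hu]

theorem eval₂_CX (p : K[X]) :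
    Polynomial.eval₂ (RatFunc.C : K →+* RatFunc K) RatFunc.X p
      = algebraMap K[X] (RatFunc K) p := by
  induction p using Polynomial.induction_on' with
  | add p q hp hq => rw [eval₂_add, map_add, hp, hq]
  | monomial n a =>
    rw [eval₂_monomial, ← C_mul_X_pow_eq_monomial, map_mul, map_pow,
      RatFunc.algebraMap_C, RatFunc.algebraMap_X]

theorem natDegree_reflect_le {R : K[X]} {N : ℕ} (hR : R.natDegree ≤ N) :
    (reflect N R).natDegree ≤ N := by
  apply natDegree_le_iff_coeff_eq_zero.mpr
  intro i hi
  rw [coeff_reflect, revAt_eq_self_of_lt hi]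
  exact coeff_eq_zero_of_natDegree_lt (lt_of_le_of_lt hR hi)

theorem reflect_reflect (R : K[X]) (N : ℕ) : reflect N (reflect N R) = R := by
  ext i
  rw [coeff_reflect, coeff_reflect, revAt_invol]

theorem eval₂_Xinv {R : K[X]} {N : ℕ} (hR : R.natDegree ≤ N) :
    Polynomial.eval₂ (RatFunc.C : K →+* RatFunc K) (RatFunc.X)⁻¹ R * RatFunc.X ^ N
      = algebraMap K[X] (RatFunc K) (reflect N R) := by
  haveI : Invertible (RatFunc.X : RatFunc K) := invertibleOfNonzero RatFunc.X_ne_zero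
  have h1 := eval₂_reflect_mul_pow (RatFunc.C : K →+* RatFunc K) RatFunc.X N (reflect N R)
    (natDegree_reflect_le hR)
  rw [invOf_eq_inv, _root_.reflect_reflect, eval₂_CX] at h1
  exact h1

theorem eval_zero_reflect (R : K[X]) (N : ℕ) : (reflect N R).eval 0 = R.coeff N := by
  rw [← coeff_zero_eq_eval_zero, coeff_reflect, revAt_le (Nat.zero_le N), Nat.sub_zero]

theorem evalInf_eq {P Q : K[X]} {N : ℕ} (G : trGood P Q N) :
    RatFunc.eval (RatFunc.C : K →+* RatFunc K) (RatFunc.X)⁻¹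
        (algebraMap K[X] (RatFunc K) P / algebraMap K[X] (RatFunc K) Q)
      = algebraMap K[X] (RatFunc K) (reflect N P) / algebraMap K[X] (RatFunc K) (reflect N Q)
      := by
  obtain ⟨hnum, hden⟩ := trNumDenom G.cop G.nc.neQ
  have hu : Q.leadingCoeff⁻¹ ≠ 0 := inv_ne_zero (leadingCoeff_ne_zero.mpr G.nc.neQ)
  have hXN : (RatFunc.X : RatFunc K) ^ N ≠ 0 := pow_ne_zero N RatFunc.X_ne_zero
  have hnumdeg : (C Q.leadingCoeff⁻¹ * P).natDegree ≤ N :=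
    (natDegree_C_mul_le _ _).trans G.degP
  have hdendeg : (C Q.leadingCoeff⁻¹ * Q).natDegree ≤ N :=
    (natDegree_C_mul_le _ _).trans G.degQ
  rw [RatFunc.eval]
  rw [hnum, hden]
  rw [← mul_div_mul_right _ _ hXN, eval₂_Xinv hnumdeg, eval₂_Xinv hdendeg,
    reflect_C_mul, reflect_C_mul, map_mul, map_mul, RatFunc.algebraMap_C,
    mul_div_mul_left _ _ (by rw [← RatFunc.algebraMap_C]; exact RatFunc.algebraMap_ne_zero (by rwa [Ne, C_eq_zero]))]

theorem ramIdxP_none_eq [IsAlgClosed K] {P Q : K[X]} {N : ℕ} (G : trGood P Q N) :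
    ramIdxP (algebraMap K[X] (RatFunc K) P / algebraMap K[X] (RatFunc K) Q) none
      = trPIdx P Q N none := by
  show ramIdxAt _ 0 = _
  rw [evalInf_eq G]
  rw [trPIdx_none]
  exact ramIdxAt_eq (cop_reflect G.cop G.degP G.degQ G.degmax G.nc.neP G.nc.neQ)
    (trNC_reflect G.nc G.degP G.degQ) 0

theorem evalP_none_eq {P Q : K[X]} {N : ℕ} (G : trGood P Q N) :
    evalP (algebraMap K[X] (RatFunc K) P / algebraMap K[X] (RatFunc K) Q) none
      = trPVal P Q N none := by
  obtain ⟨hnum, hden⟩ := trNumDenom G.cop G.nc.neQ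
  have hu : Q.leadingCoeff⁻¹ ≠ 0 := inv_ne_zero (leadingCoeff_ne_zero.mpr G.nc.neQ)
  have hnumne : C Q.leadingCoeff⁻¹ * P ≠ 0 := mul_ne_zero (by rwa [Ne, C_eq_zero]) G.nc.neP
  have hdenne : C Q.leadingCoeff⁻¹ * Q ≠ 0 := mul_ne_zero (by rwa [Ne, C_eq_zero]) G.nc.neQ
  show (if _ then some _ else none) = _
  rw [trPVal_none, trPval, trProj, eval_zero_reflect, eval_zero_reflect]
  rw [hnum, hden]
  rw [natDegree_C_mul hu]
  rcases eq_or_ne (Q.natDegree) N with hQN | hQN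
  · have hguard : (C Q.leadingCoeff⁻¹ * P).degree ≤ (C Q.leadingCoeff⁻¹ * Q).degree := by
      rw [degree_eq_natDegree hnumne, degree_eq_natDegree hdenne,
        natDegree_C_mul hu, natDegree_C_mul hu, Nat.cast_le]
      rw [hQN]
      exact G.degP
    rw [if_pos hguard]
    have hQcoeff : Q.coeff N ≠ 0 := by
      rw [← hQN]
      exact leadingCoeff_ne_zero.mpr G.nc.neQ
    rw [if_neg hQcoeff]
    rw [coeff_C_mul, coeff_C_mul, hQN, mul_div_mul_left _ _ hu]
  · have hPN : P.natDegree = N := G.degmax.resolve_right hQN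
    have hQlt : Q.natDegree < N := lt_of_le_of_ne G.degQ hQN
    have hguard : ¬((C Q.leadingCoeff⁻¹ * P).degree ≤ (C Q.leadingCoeff⁻¹ * Q).degree) := by
      rw [degree_eq_natDegree hnumne, degree_eq_natDegree hdenne,
        natDegree_C_mul hu, natDegree_C_mul hu, Nat.cast_le, hPN]
      omega
    rw [if_neg hguard]
    have hQcoeff : Q.coeff N = 0 := coeff_eq_zero_of_natDegree_lt hQlt
    rw [if_pos hQcoeff]

end TripleAux7
section TripleAux8

variable {K : Type*} [Field K]
open Polynomial

theorem trSep {P Q : K[X]} (hcop : IsCoprime P Q) (hnc : trNC P Q)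
    (hsep : derivative P * Q - P * derivative Q ≠ 0) :
    SeparableRF (algebraMap K[X] (RatFunc K) P / algebraMap K[X] (RatFunc K) Q) := by
  obtain ⟨hnum, hden⟩ := trNumDenom hcop hnc.neQ
  have hu : Q.leadingCoeff⁻¹ ≠ 0 := inv_ne_zero (leadingCoeff_ne_zero.mpr hnc.neQ)
  show derivative _ * _ - _ * derivative _ ≠ 0
  rw [hnum, hden]
  have key : derivative (C Q.leadingCoeff⁻¹ * P) * (C Q.leadingCoeff⁻¹ * Q)
      - (C Q.leadingCoeff⁻¹ * P) * derivative (C Q.leadingCoeff⁻¹ * Q)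
      = C Q.leadingCoeff⁻¹ * C Q.leadingCoeff⁻¹ * (derivative P * Q - P * derivative Q) := by
    simp only [derivative_C_mul]
    ring
  rw [key]
  exact mul_ne_zero (mul_ne_zero (by rwa [Ne, C_eq_zero]) (by rwa [Ne, C_eq_zero])) hsep

end TripleAux8
/-- Let `K` be an algebraically closed field of characteristic `≠ 3` and let
`y₁, …, y_n` be pairwise distinct points of `ℙ¹(K)`.  Then there is a nonconstant
rational function `h ∈ K(z)` with only triple ramification such that every `y_i` is a
branch point of `h`: for each `i` there is a point `a` of `ℙ¹(K)` with `h(a) = y_i`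
and `e_h(a) = 3`. -/
theorem exists_triple_ramified_map_with_branch_points
    [IsAlgClosed K] (hchar : ringChar K ≠ 3)
    (n : ℕ) (y : Fin n → Option K) (hy : Function.Injective y) :
    ∃ h : RatFunc K, (∀ c : K, h ≠ RatFunc.C c) ∧ OnlyTripleRamification h ∧
      ∀ i, ∃ a : Option K, evalP h a = y i ∧ ramIdxP h a = 3 := by
  classical
  have h3K : (3:K) ≠ 0 := by
    intro h
    have hd : ringChar K ∣ 3 := (ringChar.spec K 3).mp (by exact_mod_cast h)
    rcases (Nat.dvd_prime Nat.prime_three).mp hd with h1 | h1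
    · exact CharP.ringChar_ne_one h1
    · exact hchar h1
  obtain ⟨P, Q, N, G, hhit, _⟩ := trStar h3K n y hy ∅ Set.finite_empty (by simp)
  refine ⟨algebraMap _ (RatFunc K) P / algebraMap _ (RatFunc K) Q, ?_, ⟨?_, ?_⟩, ?_⟩
  · intro c hc
    have h1 : algebraMap _ (RatFunc K) P = RatFunc.C c * algebraMap _ (RatFunc K) Q := by
      rw [← hc, div_mul_cancel₀]
      exact RatFunc.algebraMap_ne_zero G.nc.neQ
    rw [← RatFunc.algebraMap_C, ← map_mul] at h1
    have hPQ : P = Polynomial.C c * Q := RatFunc.algebraMap_injective K h1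
    apply G.nc 1 (-c) (by simp)
    rw [map_one, one_mul, map_neg, hPQ]
    ring
  · exact trSep G.cop G.nc G.sep
  · rintro (_ | a)
    · rw [ramIdxP_none_eq G]
      exact G.idx none
    · show ramIdxAt _ a = 1 ∨ ramIdxAt _ a = 3
      rw [ramIdxAt_eq G.cop G.nc a]
      exact G.idx (some a)
  · intro i
    obtain ⟨pt, hv, hi⟩ := hhit i
    refine ⟨pt, ?_, ?_⟩
    · match pt with
      | none => rw [evalP_none_eq G]; exact hv
      | some a => rw [evalP_some_eq G.cop G.nc a]; exact hv
    · match pt with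
      | none => rw [ramIdxP_none_eq G]; exact hi
      | some a =>
        show ramIdxAt _ a = 3
        rw [ramIdxAt_eq G.cop G.nc a]
        exact hi

end
end

section
/- Let k be a field and let φ : k⟦X, Y⟧ → k⟦s⟧ be the continuous k-algebra homomorphism of formal power series rings determined by X ↦ s² and Y ↦ s³. Then the kernel of φ is exactly the ideal of k⟦X, Y⟧ generated by Y² − X³. -/
open Finsupp MvPowerSeries Finset

namespace KerSubstAux

lemma pair_eq (d : Fin 2 →₀ ℕ) : d = single 0 (d 0) + single 1 (d 1) := by
  ext i; fin_cases i <;> simp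

lemma pair_eq_single1 {a b n : ℕ} :
    single (0 : Fin 2) a + single 1 b = single 1 n ↔ a = 0 ∧ b = n := by
  constructor
  · intro h
    constructor
    · have := DFunLike.congr_fun h 0; simpa using this
    · have := DFunLike.congr_fun h 1; simpa using this
  · rintro ⟨rfl, rfl⟩; simp

lemma pair_eq_single0 {a b n : ℕ} :
    single (0 : Fin 2) a + single 1 b = single 0 n ↔ a = n ∧ b = 0 := by
  constructor
  · intro h
    constructor
    · have := DFunLike.congr_fun h 0; simpa using this
    · have := DFunLike.congr_fun h 1; simpa using this
  · rintro ⟨rfl, rfl⟩; simp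

variable {k : Type*} [Field k]

/-- key sum reindexing: the coefficient sum at `n = 2i+3j` (`j ≤ 1`) is the telescoped sum. -/
lemma sum_reindex (c : ℕ → ℕ → k) (i j : ℕ) (hj : j ≤ 1) :
    (∑ p ∈ Finset.range (2 * i + 3 * j + 1) ×ˢ Finset.range (2 * i + 3 * j + 1),
      if 2 * p.1 + 3 * p.2 = 2 * i + 3 * j then c p.1 p.2 else 0) =
    ∑ t ∈ Finset.range (i + 1), if 3 * t ≤ i then c (i - 3 * t) (j + 2 * t) else 0 := by
  rw [← Finset.sum_filter, ← Finset.sum_filter]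
  refine Finset.sum_nbij' (i := fun p => (p.2 - j) / 2) (j := fun t => (i - 3 * t, j + 2 * t))
    ?_ ?_ ?_ ?_ ?_
  · intro p hp
    simp only [mem_filter, mem_product, mem_range] at hp ⊢
    omega
  · intro t ht
    simp only [mem_filter, mem_product, mem_range] at ht ⊢
    omega
  · intro p hp
    simp only [mem_filter, mem_product, mem_range] at hp
    have h1 : i - 3 * ((p.2 - j) / 2) = p.1 := by omega
    have h2 : j + 2 * ((p.2 - j) / 2) = p.2 := by omega
    rw [Prod.ext_iff]
    exact ⟨h1, h2⟩
  · intro t ht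
    simp only [mem_filter, mem_range] at ht
    show (j + 2 * t - j) / 2 = t
    omega
  · intro p hp
    simp only [mem_filter, mem_product, mem_range] at hp
    have h1 : i - 3 * ((p.2 - j) / 2) = p.1 := by omega
    have h2 : j + 2 * ((p.2 - j) / 2) = p.2 := by omega
    rw [h1, h2]

/-- telescoping identity for the partial sums. -/
lemma telescope (c : ℕ → ℕ → k) (i j : ℕ) :
    (∑ t ∈ Finset.range (i + 1), if 3 * t ≤ i then c (i - 3 * t) (j + 2 * t) else 0) =
    c i j + (if 3 ≤ i then
      ∑ t ∈ Finset.range (i - 3 + 1),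
        if 3 * t ≤ i - 3 then c (i - 3 - 3 * t) (j + 2 + 2 * t) else 0
      else 0) := by
  rw [Finset.sum_range_succ']
  simp only [Nat.mul_zero, Nat.zero_le, if_true, Nat.sub_zero, Nat.add_zero]
  rw [add_comm]
  congr 1
  by_cases hi : 3 ≤ i
  · rw [if_pos hi]
    rw [Finset.sum_subset (Finset.range_subset_range.2 (by omega : i - 3 + 1 ≤ i))]
    · apply Finset.sum_congr rfl
      intro t ht
      simp only [mem_range] at ht
      by_cases h3 : 3 * t ≤ i - 3
      · rw [if_pos h3, if_pos (by omega)]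
        congr 1 <;> omega
      · rw [if_neg h3, if_neg (by omega)]
    · intro t ht hnt
      simp only [mem_range] at ht hnt
      rw [if_neg (by omega)]
  · rw [if_neg hi]
    apply Finset.sum_eq_zero
    intro t ht
    rw [if_neg (by omega)]

end KerSubstAux

open KerSubstAux in
/-- Let `k` be a field and let `φ : k⟦X, Y⟧ → k⟦s⟧` be the continuous `k`-algebra
homomorphism of formal power series rings determined by `X ↦ s²`, `Y ↦ s³`, i.e. the
substitution `F(X, Y) ↦ F(s², s³)`.  Concretely, `φ` is the `k`-algebra homomorphism
whose value on `F` has `n`-th coefficient `∑_{2i + 3j = n} F_{(i,j)}`.  Then the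
kernel of `φ` is exactly the ideal of `k⟦X, Y⟧` generated by `Y² − X³`. -/
theorem ker_subst_sq_cube (k : Type*) [Field k]
    (φ : MvPowerSeries (Fin 2) k →ₐ[k] PowerSeries k)
    (hφ : ∀ (F : MvPowerSeries (Fin 2) k) (n : ℕ),
      PowerSeries.coeff (R := k) n (φ F) =
        ∑ p ∈ Finset.range (n + 1) ×ˢ Finset.range (n + 1),
          if 2 * p.1 + 3 * p.2 = n then
            MvPowerSeries.coeff (R := k) (Finsupp.single 0 p.1 + Finsupp.single 1 p.2) F
          else 0) :
    RingHom.ker φ =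
      Ideal.span {(MvPowerSeries.X 1 : MvPowerSeries (Fin 2) k) ^ 2 -
        MvPowerSeries.X 0 ^ 3} := by
  classical
  set g : MvPowerSeries (Fin 2) k := MvPowerSeries.X 1 ^ 2 - MvPowerSeries.X 0 ^ 3 with hg
  -- coefficients of g
  have hcoeffg : ∀ a b : ℕ, MvPowerSeries.coeff (R := k) (single 0 a + single 1 b) g =
      (if a = 0 ∧ b = 2 then 1 else 0) - (if a = 3 ∧ b = 0 then 1 else 0) := by
    intro a b
    rw [hg, map_sub, MvPowerSeries.coeff_X_pow, MvPowerSeries.coeff_X_pow]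
    congr 1
    · simp [pair_eq_single1]
    · simp [pair_eq_single0]
  -- φ g = 0
  have hφg : φ g = 0 := by
    ext n
    rw [hφ, map_zero]
    by_cases h6 : n = 6
    · subst h6
      rw [Finset.sum_product]
      simp only [Finset.sum_range_succ, Finset.sum_range_zero, hcoeffg]
      norm_num
    · apply Finset.sum_eq_zero
      intro p hp
      by_cases h1 : 2 * p.1 + 3 * p.2 = n
      · rw [if_pos h1, hcoeffg, if_neg, if_neg, sub_zero]
        · rintro ⟨ha, hb⟩; omega
        · rintro ⟨ha, hb⟩; omega
      · rw [if_neg h1]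
  apply le_antisymm
  · -- ker ⊆ span
    intro F hF
    rw [RingHom.mem_ker] at hF
    rw [Ideal.mem_span_singleton']
    -- coefficients of F
    set c : ℕ → ℕ → k := fun a b => MvPowerSeries.coeff (R := k) (single 0 a + single 1 b) F with hc
    -- the quotient power series
    set Q : MvPowerSeries (Fin 2) k := fun d =>
      ∑ t ∈ Finset.range (d 0 + 1), if 3 * t ≤ d 0 then c (d 0 - 3 * t) (d 1 + 2 + 2 * t) else 0
      with hQ
    have hQcoeff : ∀ d : Fin 2 →₀ ℕ, MvPowerSeries.coeff (R := k) d Q =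
        ∑ t ∈ Finset.range (d 0 + 1), if 3 * t ≤ d 0 then c (d 0 - 3 * t) (d 1 + 2 + 2 * t) else 0 :=
      fun d => rfl
    -- the vanishing of partial sums with j ≤ 1
    have hS0 : ∀ i j : ℕ, j ≤ 1 →
        (∑ t ∈ Finset.range (i + 1), if 3 * t ≤ i then c (i - 3 * t) (j + 2 * t) else 0) = 0 := by
      intro i j hj
      rw [← sum_reindex c i j hj]
      have := hφ F (2 * i + 3 * j)
      rw [hF, map_zero] at this
      exact this.symm
    refine ⟨Q, ?_⟩
    rw [show Q * g = g * Q from mul_comm _ _]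
    ext d
    have hgQ : MvPowerSeries.coeff (R := k) d (g * Q) =
        (if single (1 : Fin 2) 2 ≤ d then MvPowerSeries.coeff (R := k) (d - single 1 2) Q else 0)
        - (if single (0 : Fin 2) 3 ≤ d then MvPowerSeries.coeff (R := k) (d - single 0 3) Q else 0) := by
      rw [hg, sub_mul, map_sub, MvPowerSeries.X_pow_eq, MvPowerSeries.X_pow_eq,
        MvPowerSeries.coeff_monomial_mul, MvPowerSeries.coeff_monomial_mul]
      simp only [one_mul]
    rw [hgQ]
    set i := d 0 with hi
    set j := d 1 with hj
    have hd01 : (d - single (1:Fin 2) 2 : Fin 2 →₀ ℕ) 0 = i := by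
      rw [Finsupp.tsub_apply]; simp [hi]
    have hd11 : (d - single (1:Fin 2) 2 : Fin 2 →₀ ℕ) 1 = j - 2 := by
      rw [Finsupp.tsub_apply]; simp [hj]
    have hd00 : (d - single (0:Fin 2) 3 : Fin 2 →₀ ℕ) 0 = i - 3 := by
      rw [Finsupp.tsub_apply]; simp [hi]
    have hd10 : (d - single (0:Fin 2) 3 : Fin 2 →₀ ℕ) 1 = j := by
      rw [Finsupp.tsub_apply]; simp [hj]
    have hcd : MvPowerSeries.coeff (R := k) d F = c i j := by
      rw [hc]; exact congrArg (fun m => MvPowerSeries.coeff (R := k) m F) (pair_eq d)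
    rw [hcd, hQcoeff, hQcoeff]
    simp only [hd01, hd11, hd00, hd10, Finsupp.single_le_iff, ← hi, ← hj]
    by_cases h2j : 2 ≤ j
    · rw [if_pos h2j]
      have hjj : j - 2 + 2 = j := by omega
      rw [hjj]
      rw [telescope c i j]
      by_cases h3i : 3 ≤ i
      · rw [if_pos h3i]; ring
      · rw [if_neg h3i]; ring
    · rw [if_neg h2j]
      have hj1 : j ≤ 1 := by omega
      have h0 := hS0 i j hj1
      rw [telescope c i j] at h0
      by_cases h3i : 3 ≤ i
      · rw [if_pos h3i] at h0 ⊢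
        linear_combination -h0
      · rw [if_neg h3i] at h0 ⊢
        linear_combination -h0
  · -- span ⊆ ker
    rw [Ideal.span_le, Set.singleton_subset_iff]
    exact RingHom.mem_ker.mpr hφg
end
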